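/- Let R_l (l ≥ −1) and R_{−k} (k ≥ 2) be the derivations on the descendent algebra D defined by R_l(ch_i(γ)) = (∏_{j=0}^{l}(i+j)) ch_{i+l}(γ) and R_{−k}(ch_i(γ)) = ((i−k)!/(i−1)!) ch_{i−k}(γ) for i ≥ k (zero otherwise). Then applied to a single generator, ([R_l, R_{−k}]) ch_i(γ) = (−l−k)·R_{l−k}(ch_i(γ)) + correction terms supported only on generators ch_i(γ) with i < k or i < k − l; in particular when restricted to generators ch_i(γ) with i ≥ k and i ≥ k − l the identity [R_l, R_{−k}] ch_i(γ) = (−l−k) R_{l−k} ch_i(γ) holds (with R_{l−k} interpreted by the appropriate formula according to the sign of l−k). -/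

import Mathlib

lemma fact_succ' (m : ℤ) (hm : 1 ≤ m) :
    (m.toNat.factorial : ℚ) = (m : ℚ) * ((m - 1).toNat.factorial : ℚ) := by
  have h : m.toNat = (m - 1).toNat + 1 := by omega
  rw [h, Nat.factorial_succ, Nat.cast_mul, Nat.cast_add, Nat.cast_one]
  have h2 : (((m - 1).toNat : ℕ) : ℚ) = (m : ℚ) - 1 := by
    have := Int.toNat_of_nonneg (show (0:ℤ) ≤ m - 1 by omega)
    exact_mod_cast congrArg (fun z : ℤ => (z : ℚ)) this
  rw [h2]; ring

lemma prod_ratio' (m : ℤ) (hm : 0 ≤ m) :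
    ∀ n : ℕ, (1 ≤ m ∨ 1 ≤ n) →
      ∏ j ∈ Finset.range n, ((m : ℚ) + (j : ℚ)) =
        (m : ℚ) * (((m + n - 1).toNat.factorial : ℚ)) / ((m.toNat.factorial : ℚ)) := by
  intro n
  induction n with
  | zero =>
    intro h
    have hm1 : 1 ≤ m := by omega
    simp only [Finset.prod_range_zero, Nat.cast_zero, add_zero]
    rw [fact_succ' m hm1]
    have h1 : ((m - 1).toNat.factorial : ℚ) ≠ 0 := Nat.cast_ne_zero.mpr (Nat.factorial_ne_zero _)
    have h2 : (m : ℚ) ≠ 0 := by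
      exact_mod_cast (by omega : m ≠ 0)
    field_simp
  | succ n ih =>
    intro _
    by_cases hm0 : m = 0
    · subst hm0
      rw [Finset.prod_eq_zero (Finset.mem_range.mpr (Nat.succ_pos n))]
      · simp
      · simp
    · have hm1 : 1 ≤ m := by omega
      rw [Finset.prod_range_succ, ih (Or.inl hm1)]
      have key : ((m + (n+1) - 1).toNat.factorial : ℚ)
          = ((m : ℚ) + n) * ((m + n - 1).toNat.factorial : ℚ) := by
        have h3 : (m + (n+1) : ℤ) - 1 = m + n := by push_cast; ring
        rw [h3, fact_succ' (m + n) (by omega)]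
        push_cast
        ring_nf
      push_cast
      rw [key]
      have h1 : ((m.toNat.factorial : ℕ) : ℚ) ≠ 0 := Nat.cast_ne_zero.mpr (Nat.factorial_ne_zero _)
      field_simp

theorem stmt_6 (A : Type*) [CommRing A] [Algebra ℚ A]
    (H : Type*) [AddCommGroup H] [Module ℚ H]
    (ch : ℤ → H →ₗ[ℚ] A)
    (hneg : ∀ i : ℤ, i < 0 → ch i = 0)
    (Rpos : ℤ → Derivation ℚ A A) (Rneg : ℕ → Derivation ℚ A A)
    (hRpos : ∀ l : ℤ, -1 ≤ l → ∀ (i : ℤ) (γ : H),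
      Rpos l (ch i γ) = (∏ j ∈ Finset.range (l + 1).toNat, ((i : ℚ) + (j : ℚ))) • ch (i + l) γ)
    (hRneg : ∀ k : ℕ, 2 ≤ k → ∀ (i : ℤ) (γ : H),
      Rneg k (ch i γ) =
        (if (k : ℤ) ≤ i then ((i - k).toNat.factorial : ℚ) / ((i - 1).toNat.factorial : ℚ)
          else 0) • ch (i - k) γ)
    (l : ℤ) (hl : -1 ≤ l) (k : ℕ) (hk : 2 ≤ k)
    (i : ℤ) (γ : H) (hik : (k : ℤ) ≤ i) (hikl : (k : ℤ) - l ≤ i) :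
    Rpos l (Rneg k (ch i γ)) - Rneg k (Rpos l (ch i γ)) =
      ((-l : ℚ) - (k : ℚ)) •
        ((if -1 ≤ l - (k : ℤ)
            then ∏ j ∈ Finset.range (l - (k : ℤ) + 1).toNat, ((i : ℚ) + (j : ℚ))
            else if (k : ℤ) - l ≤ i
              then ((i - ((k : ℤ) - l)).toNat.factorial : ℚ) / ((i - 1).toNat.factorial : ℚ)
              else 0) • ch (i + (l - (k : ℤ))) γ) := by
  have hkl : (k : ℤ) ≤ i + l := by omega
  have hB : ((i - 1).toNat.factorial : ℚ) ≠ 0 := Nat.cast_ne_zero.mpr (Nat.factorial_ne_zero _)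
  have hA : ((i - k).toNat.factorial : ℚ) ≠ 0 := Nat.cast_ne_zero.mpr (Nat.factorial_ne_zero _)
  have hE : ((i + l - 1).toNat.factorial : ℚ) ≠ 0 := Nat.cast_ne_zero.mpr (Nat.factorial_ne_zero _)
  have hiQ : (i : ℚ) ≠ 0 := by exact_mod_cast (by omega : i ≠ 0)
  -- the common value of the RHS coefficient
  have hC : (if -1 ≤ l - (k : ℤ)
            then ∏ j ∈ Finset.range (l - (k : ℤ) + 1).toNat, ((i : ℚ) + (j : ℚ))
            else if (k : ℤ) - l ≤ i
              then ((i - ((k : ℤ) - l)).toNat.factorial : ℚ) / ((i - 1).toNat.factorial : ℚ)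
              else 0)
      = ((i + l - k).toNat.factorial : ℚ) / ((i - 1).toNat.factorial : ℚ) := by
    split_ifs with h1 h2
    · rw [prod_ratio' i (by omega) _ (Or.inl (by omega))]
      rw [show (i + ((l - (k:ℤ) + 1).toNat : ℤ) - 1) = i + l - k from by omega]
      rw [fact_succ' i (by omega)]
      field_simp
    · rw [show i - ((k:ℤ) - l) = i + l - k from by ring]
  rw [hC]
  rw [hRneg k hk i γ, if_pos hik, Derivation.map_smul, hRpos l hl (i - k) γ,
      hRpos l hl i γ, Derivation.map_smul, hRneg k hk (i + l) γ, if_pos hkl,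
      smul_smul, smul_smul, smul_smul]
  rw [show i - (k:ℤ) + l = i + (l - k) from by ring, show i + l - (k:ℤ) = i + (l - k) from by ring]
  rw [← sub_smul]
  congr 1
  rw [prod_ratio' (i - k) (by omega) _ (by omega),
      prod_ratio' i (by omega) _ (Or.inl (by omega))]
  rw [show (i - (k:ℤ) + ((l + 1).toNat : ℤ) - 1) = i + l - k from by omega,
      show (i + ((l + 1).toNat : ℤ) - 1) = i + l from by omega]
  rw [fact_succ' i (by omega), fact_succ' (i + l) (by omega)]
  rw [show i + (l - (k:ℤ)) = i + l - k from by ring]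
  field_simp
  push_cast
  ring
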